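/- arXiv:2204.01650 — 2 statements merged into one kernel-verified Lean document; each statement's English description precedes it below -/
import Mathlib

section
/- Let p ≥ 2 be an integer. The ring R_p = ℂ[E,F,H,W]/I_p is a finite-dimensional ℂ-vector space of dimension 6p − 1. -/
open MvPolynomial

/-- The constant `C_p = (4p)^{2p-1} / ((2p-1)!)²`. -/
noncomputable def Cconst (p : ℕ) : ℂ :=
  (4 * p : ℂ) ^ (2 * p - 1) / ((2 * p - 1).factorial : ℂ) ^ 2

/-- The variables `E, F, H, W` of `ℂ[E,F,H,W]`. -/
noncomputable def Evar : MvPolynomial (Fin 4) ℂ := X 0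
noncomputable def Fvar : MvPolynomial (Fin 4) ℂ := X 1
noncomputable def Hvar : MvPolynomial (Fin 4) ℂ := X 2
noncomputable def Wvar : MvPolynomial (Fin 4) ℂ := X 3

/-- The ideal `I_p` of `ℂ[E,F,H,W]` generated by the ten defining polynomials. -/
noncomputable def Ip (p : ℕ) : Ideal (MvPolynomial (Fin 4) ℂ) :=
  Ideal.span
    { Wvar ^ (3 * p - 1), Evar ^ 2, Fvar ^ 2, Evar * Hvar, Fvar * Hvar,
      Wvar ^ p * Evar, Wvar ^ p * Fvar, Wvar ^ p * Hvar,
      Hvar ^ 2 - C (Cconst p) * Wvar ^ (2 * p - 1),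
      Evar * Fvar + C (Cconst p) * Wvar ^ (2 * p - 1) }

namespace Stmt3Aux

noncomputable def mon (a b c w : ℕ) : MvPolynomial (Fin 4) ℂ :=
  X 0 ^ a * X 1 ^ b * X 2 ^ c * X 3 ^ w

/-- normal form of `H^c W^w`. -/
noncomputable def nfH (p c w : ℕ) : MvPolynomial (Fin 4) ℂ :=
  Cconst p ^ (c / 2) •
    (if c % 2 = 1 then
        (if w + (2 * p - 1) * (c / 2) < p then mon 0 0 1 (w + (2 * p - 1) * (c / 2)) else 0)
     else
        (if w + (2 * p - 1) * (c / 2) < 3 * p - 1 then mon 0 0 0 (w + (2 * p - 1) * (c / 2))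
         else 0))

/-- Normal form of the monomial `E^a F^b H^c W^w` modulo `Ip p`. -/
noncomputable def nf (p a b c w : ℕ) : MvPolynomial (Fin 4) ℂ :=
  match a, b with
  | 0, 0 => nfH p c w
  | 1, 0 => if c = 0 ∧ w < p then mon 1 0 0 w else 0
  | 0, 1 => if c = 0 ∧ w < p then mon 0 1 0 w else 0
  | 1, 1 => if c = 0 ∧ w < p then (-(Cconst p)) • mon 0 0 0 (w + (2 * p - 1)) else 0
  | _, _ => 0

variable {p : ℕ}

lemma hmul_ge {k : ℕ} (hk : 1 ≤ k) : 2 * p - 1 ≤ (2 * p - 1) * k :=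
  Nat.le_mul_of_pos_right _ hk

lemma nfH_zero_of_big (hp : 1 ≤ p) (c w : ℕ) (hw : 3 * p - 1 ≤ w) : nfH p c w = 0 := by
  unfold nfH
  split_ifs with h1 h2 h3 <;> first | (exfalso; omega) | simp

section NFzero
variable (hp : 2 ≤ p)
include hp

lemma nf_L1 (a b c w : ℕ) : nf p a b c (w + (3 * p - 1)) = 0 := by
  rcases a with _ | _ | a <;> rcases b with _ | _ | b <;>
    simp only [nf] <;>
    first
      | rfl
      | (exact nfH_zero_of_big (by omega) _ _ (by omega))
      | (rw [if_neg (by omega)])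

lemma nf_L2 (a b c w : ℕ) : nf p (a + 2) b c w = 0 := by
  rcases b with _ | _ | b <;> rfl

lemma nf_L3 (a b c w : ℕ) : nf p a (b + 2) c w = 0 := by
  rcases a with _ | _ | a <;> rfl

lemma nf_L4 (a b c w : ℕ) : nf p (a + 1) b (c + 1) w = 0 := by
  rcases a with _ | _ | a <;> rcases b with _ | _ | b <;>
    simp only [nf] <;> first | rfl | (rw [if_neg (by omega)])

lemma nf_L5 (a b c w : ℕ) : nf p a (b + 1) (c + 1) w = 0 := by
  rcases a with _ | _ | a <;> rcases b with _ | _ | b <;>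
    simp only [nf] <;> first | rfl | (rw [if_neg (by omega)])

lemma nf_L6 (a b c w : ℕ) : nf p (a + 1) b c (w + p) = 0 := by
  rcases a with _ | _ | a <;> rcases b with _ | _ | b <;>
    simp only [nf] <;> first | rfl | (rw [if_neg (by omega)])

lemma nf_L7 (a b c w : ℕ) : nf p a (b + 1) c (w + p) = 0 := by
  rcases a with _ | _ | a <;> rcases b with _ | _ | b <;>
    simp only [nf] <;> first | rfl | (rw [if_neg (by omega)])

lemma nf_L8 (a b c w : ℕ) : nf p a b (c + 1) (w + p) = 0 := by
  rcases a with _ | _ | a <;> rcases b with _ | _ | b <;>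
    simp only [nf] <;> first | rfl | (rw [if_neg (by omega)]) | skip
  -- remaining: a = b = 0 : nfH p (c+1) (w+p) = 0
  unfold nfH
  rcases Nat.even_or_odd c with ⟨k, hk⟩ | ⟨k, hk⟩
  · -- c = 2k, c+1 odd, (c+1)/2 = k
    have h1 : (c + 1) % 2 = 1 := by omega
    have h2 : (c + 1) / 2 = k := by omega
    rw [h1, h2, if_pos rfl, if_neg (by omega), smul_zero]
  · -- c = 2k+1, c+1 even, (c+1)/2 = k+1
    have h1 : ¬((c + 1) % 2 = 1) := by omega
    have h2 : (c + 1) / 2 = k + 1 := by omega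
    have h3 := hmul_ge (p := p) (k := k + 1) (by omega)
    rw [h2, if_neg h1, if_neg (by omega), smul_zero]

lemma nf_L9 (a b c w : ℕ) :
    nf p a b (c + 2) w = Cconst p • nf p a b c (w + (2 * p - 1)) := by
  rcases a with _ | _ | a <;> rcases b with _ | _ | b <;>
    simp only [nf] <;>
    first
      | (simp only [smul_zero])
      | (rw [if_neg (by omega), if_neg (by omega), smul_zero])
      | skip
  -- a = b = 0
  unfold nfH
  have h1 : (c + 2) % 2 = c % 2 := by omega
  have h2 : (c + 2) / 2 = c / 2 + 1 := by omega
  have h3 : w + (2 * p - 1) * (c / 2 + 1) = w + (2 * p - 1) + (2 * p - 1) * (c / 2) := by ring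
  rw [h1, h2, h3, pow_succ, mul_comm (Cconst p ^ (c / 2)), mul_smul]

lemma nf_L10 (a b c w : ℕ) :
    nf p (a + 1) (b + 1) c w = (-(Cconst p)) • nf p a b c (w + (2 * p - 1)) := by
  rcases a with _ | _ | a <;> rcases b with _ | _ | b <;>
    simp only [nf] <;>
    first
      | (simp only [smul_zero])
      | (rw [if_neg (by omega), smul_zero])
      | (rw [if_neg (by omega), if_neg (by omega), smul_zero])
      | skip
  -- a = b = 0 : if c = 0 ∧ w < p then -C • mon 0 0 0 (w+2p-1) else 0 = -C • nfH p c (w+2p-1)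
  unfold nfH
  rcases Nat.eq_zero_or_pos c with rfl | hc
  · simp only [Nat.zero_div, Nat.zero_mod, pow_zero, one_smul, Nat.mul_zero, Nat.add_zero,
      Nat.zero_ne_one, if_false, eq_self_iff_true, true_and]
    by_cases hw : w < p
    · rw [if_pos hw, if_pos (by omega)]
    · rw [if_neg hw, if_neg (by omega), smul_zero]
  · rw [if_neg (by omega)]
    rcases Nat.even_or_odd c with ⟨k, hk⟩ | ⟨k, hk⟩
    · have h1 : ¬(c % 2 = 1) := by omega
      have h3 := hmul_ge (p := p) (k := c / 2) (by omega)
      rw [if_neg h1, if_neg (by omega), smul_zero, smul_zero]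
    · have h1 : c % 2 = 1 := by omega
      rw [if_pos h1, if_neg (by omega), smul_zero, smul_zero]

end NFzero

namespace Mem

variable {p : ℕ}

lemma memW : (X 3 : MvPolynomial (Fin 4) ℂ) ^ (3 * p - 1) ∈ Ip p :=
  Ideal.subset_span (Or.inl rfl)
lemma memE2 : (X 0 : MvPolynomial (Fin 4) ℂ) ^ 2 ∈ Ip p :=
  Ideal.subset_span (Or.inr (Or.inl rfl))
lemma memF2 : (X 1 : MvPolynomial (Fin 4) ℂ) ^ 2 ∈ Ip p :=
  Ideal.subset_span (Or.inr (Or.inr (Or.inl rfl)))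
lemma memEH : (X 0 : MvPolynomial (Fin 4) ℂ) * X 2 ∈ Ip p :=
  Ideal.subset_span (Or.inr (Or.inr (Or.inr (Or.inl rfl))))
lemma memFH : (X 1 : MvPolynomial (Fin 4) ℂ) * X 2 ∈ Ip p :=
  Ideal.subset_span (Or.inr (Or.inr (Or.inr (Or.inr (Or.inl rfl)))))
lemma memWE : (X 3 : MvPolynomial (Fin 4) ℂ) ^ p * X 0 ∈ Ip p :=
  Ideal.subset_span (Or.inr (Or.inr (Or.inr (Or.inr (Or.inr (Or.inl rfl))))))
lemma memWF : (X 3 : MvPolynomial (Fin 4) ℂ) ^ p * X 1 ∈ Ip p :=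
  Ideal.subset_span (Or.inr (Or.inr (Or.inr (Or.inr (Or.inr (Or.inr (Or.inl rfl)))))))
lemma memWH : (X 3 : MvPolynomial (Fin 4) ℂ) ^ p * X 2 ∈ Ip p :=
  Ideal.subset_span (Or.inr (Or.inr (Or.inr (Or.inr (Or.inr (Or.inr (Or.inr (Or.inl rfl))))))))
lemma memH2 : (X 2 : MvPolynomial (Fin 4) ℂ) ^ 2 - C (Cconst p) * X 3 ^ (2 * p - 1) ∈ Ip p :=
  Ideal.subset_span
    (Or.inr (Or.inr (Or.inr (Or.inr (Or.inr (Or.inr (Or.inr (Or.inr (Or.inl rfl)))))))))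
lemma memEF : (X 0 : MvPolynomial (Fin 4) ℂ) * X 1 + C (Cconst p) * X 3 ^ (2 * p - 1) ∈ Ip p :=
  Ideal.subset_span
    (Or.inr (Or.inr (Or.inr (Or.inr (Or.inr (Or.inr (Or.inr (Or.inr (Or.inr rfl)))))))))

end Mem

open Mem

variable {p : ℕ}

lemma mon000 (w : ℕ) : mon 0 0 0 w = X 3 ^ w := by unfold mon; simp
lemma mon001 (w : ℕ) : mon 0 0 1 w = X 2 * X 3 ^ w := by unfold mon; simp
lemma mon100 (w : ℕ) : mon 1 0 0 w = X 0 * X 3 ^ w := by unfold mon; simp [mul_assoc, mul_comm]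
lemma mon010 (w : ℕ) : mon 0 1 0 w = X 1 * X 3 ^ w := by unfold mon; simp

lemma memW_pow (w : ℕ) (hw : 3 * p - 1 ≤ w) : mon 0 0 0 w ∈ Ip p := by
  rw [mon000, show w = (w - (3 * p - 1)) + (3 * p - 1) by omega, pow_add]
  exact Ideal.mul_mem_left _ _ memW

lemma memH_pow (w : ℕ) (hw : p ≤ w) : mon 0 0 1 w ∈ Ip p := by
  have : mon 0 0 1 w = X 3 ^ (w - p) * (X 3 ^ p * X 2) := by
    rw [mon001, show X 3 ^ (w - p) * ((X 3 : MvPolynomial (Fin 4) ℂ) ^ p * X 2)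
      = X 2 * (X 3 ^ (w - p) * X 3 ^ p) by ring, ← pow_add]
    congr 2
    omega
  rw [this]; exact Ideal.mul_mem_left _ _ memWH

lemma memE_pow (w : ℕ) (hw : p ≤ w) : mon 1 0 0 w ∈ Ip p := by
  have : mon 1 0 0 w = X 3 ^ (w - p) * (X 3 ^ p * X 0) := by
    rw [mon100, show X 3 ^ (w - p) * ((X 3 : MvPolynomial (Fin 4) ℂ) ^ p * X 0)
      = X 0 * (X 3 ^ (w - p) * X 3 ^ p) by ring, ← pow_add]
    congr 2
    omega
  rw [this]; exact Ideal.mul_mem_left _ _ memWE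

lemma memF_pow (w : ℕ) (hw : p ≤ w) : mon 0 1 0 w ∈ Ip p := by
  have : mon 0 1 0 w = X 3 ^ (w - p) * (X 3 ^ p * X 1) := by
    rw [mon010, show X 3 ^ (w - p) * ((X 3 : MvPolynomial (Fin 4) ℂ) ^ p * X 1)
      = X 1 * (X 3 ^ (w - p) * X 3 ^ p) by ring, ← pow_add]
    congr 2
    omega
  rw [this]; exact Ideal.mul_mem_left _ _ memWF

/-- reduction of pairs of `H`'s -/
lemma hpair (k r w : ℕ) :
    mon 0 0 (2 * k + r) w - (Cconst p ^ k) • mon 0 0 r (w + (2 * p - 1) * k) ∈ Ip p := by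
  induction k generalizing w with
  | zero => simp only [Nat.mul_zero, Nat.zero_add, Nat.add_zero, pow_zero, one_smul,
      sub_self]; exact Ideal.zero_mem _
  | succ k ih =>
    have h1 : mon 0 0 (2 * k + r) w *
        ((X 2 : MvPolynomial (Fin 4) ℂ) ^ 2 - C (Cconst p) * X 3 ^ (2 * p - 1)) ∈ Ip p :=
      Ideal.mul_mem_left _ _ memH2
    have h2 : (C (Cconst p) : MvPolynomial (Fin 4) ℂ) * (mon 0 0 (2 * k + r) (w + (2 * p - 1)) -
        Cconst p ^ k • mon 0 0 r (w + (2 * p - 1) + (2 * p - 1) * k)) ∈ Ip p :=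
      Ideal.mul_mem_left _ _ (ih (w + (2 * p - 1)))
    have h3 := Ideal.add_mem _ h1 h2
    convert h3 using 1
    have e1 : 2 * (k + 1) + r = (2 * k + r) + 2 := by ring
    have e2 : w + (2 * p - 1) * (k + 1) = w + (2 * p - 1) + (2 * p - 1) * k := by ring
    rw [e1, e2]
    unfold mon
    simp only [smul_sub, smul_smul, MvPolynomial.smul_eq_C_mul, ← pow_succ', map_mul, map_pow]
    ring


lemma smul_mem' (c : ℂ) {x : MvPolynomial (Fin 4) ℂ} (hx : x ∈ Ip p) : c • x ∈ Ip p := by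
  rw [MvPolynomial.smul_eq_C_mul]; exact Ideal.mul_mem_left _ _ hx

lemma memEF_pow (c w : ℕ) (h : 1 ≤ c ∨ p ≤ w) : mon 1 1 c w ∈ Ip p := by
  rcases c with _ | c
  · -- c = 0, w ≥ p
    have hw : p ≤ w := by tauto
    have hid : mon 1 1 0 w = X 3 ^ w * ((X 0 : MvPolynomial (Fin 4) ℂ) * X 1
          + C (Cconst p) * X 3 ^ (2 * p - 1))
        - C (Cconst p) * (X 3 ^ (w - p) * X 3 ^ (3 * p - 1)) := by
      rw [← pow_add, show w - p + (3 * p - 1) = w + (2 * p - 1) by omega]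
      unfold mon
      rw [pow_add]
      ring
    rw [hid]
    exact Ideal.sub_mem _ (Ideal.mul_mem_left _ _ memEF)
      (Ideal.mul_mem_left _ _ (Ideal.mul_mem_left _ _ memW))
  · -- c ≥ 1 : contains E*H
    have hid : mon 1 1 (c + 1) w = (X 1 * X 2 ^ c * X 3 ^ w) * ((X 0 : MvPolynomial (Fin 4) ℂ) * X 2) := by
      unfold mon; rw [pow_succ]; ring
    rw [hid]
    exact Ideal.mul_mem_left _ _ memEH

lemma memE_gen (c w : ℕ) (h : 1 ≤ c ∨ p ≤ w) : mon 1 0 c w ∈ Ip p := by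
  rcases c with _ | c
  · exact memE_pow w (by tauto)
  · have hid : mon 1 0 (c + 1) w = (X 2 ^ c * X 3 ^ w) * ((X 0 : MvPolynomial (Fin 4) ℂ) * X 2) := by
      unfold mon; rw [pow_succ]; ring
    rw [hid]; exact Ideal.mul_mem_left _ _ memEH

lemma memF_gen (c w : ℕ) (h : 1 ≤ c ∨ p ≤ w) : mon 0 1 c w ∈ Ip p := by
  rcases c with _ | c
  · exact memF_pow w (by tauto)
  · have hid : mon 0 1 (c + 1) w = (X 2 ^ c * X 3 ^ w) * ((X 1 : MvPolynomial (Fin 4) ℂ) * X 2) := by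
      unfold mon; rw [pow_succ]; ring
    rw [hid]; exact Ideal.mul_mem_left _ _ memFH

/-- P1 : every monomial is congruent to its normal form. -/
lemma P1 (hp : 2 ≤ p) (a b c w : ℕ) : mon a b c w - nf p a b c w ∈ Ip p := by
  rcases a with _ | _ | a
  · rcases b with _ | _ | b
    · -- a = 0, b = 0
      show mon 0 0 c w - nfH p c w ∈ Ip p
      obtain ⟨k, r, hr, rfl⟩ : ∃ k r, r < 2 ∧ c = 2 * k + r := ⟨c / 2, c % 2, by omega, by omega⟩
      have hdiv : (2 * k + r) / 2 = k := by omega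
      have hmod : (2 * k + r) % 2 = r := by omega
      unfold nfH
      rw [hdiv, hmod]
      interval_cases r
      · rw [if_neg (by omega)]
        split_ifs with h1
        · exact hpair k 0 w
        · rw [smul_zero, sub_zero,
            show mon 0 0 (2 * k + 0) w = (mon 0 0 (2 * k + 0) w
              - Cconst p ^ k • mon 0 0 0 (w + (2 * p - 1) * k))
              + Cconst p ^ k • mon 0 0 0 (w + (2 * p - 1) * k) by ring]
          exact Ideal.add_mem _ (hpair k 0 w)
            (smul_mem' _ (memW_pow _ (by omega)))
      · rw [if_pos rfl]
        split_ifs with h1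
        · exact hpair k 1 w
        · rw [smul_zero, sub_zero,
            show mon 0 0 (2 * k + 1) w = (mon 0 0 (2 * k + 1) w
              - Cconst p ^ k • mon 0 0 1 (w + (2 * p - 1) * k))
              + Cconst p ^ k • mon 0 0 1 (w + (2 * p - 1) * k) by ring]
          exact Ideal.add_mem _ (hpair k 1 w)
            (smul_mem' _ (memH_pow _ (by omega)))
    · -- a = 0, b = 1
      show mon 0 1 c w - (if c = 0 ∧ w < p then mon 0 1 0 w else 0) ∈ Ip p
      split_ifs with h1
      · obtain ⟨rfl, -⟩ := h1
        rw [sub_self]; exact Ideal.zero_mem _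
      · rw [sub_zero]; exact memF_gen c w (by omega)
    · -- a = 0, b ≥ 2
      show mon 0 (b + 2) c w - 0 ∈ Ip p
      rw [sub_zero, show mon 0 (b + 2) c w
        = (X 1 ^ b * X 2 ^ c * X 3 ^ w) * ((X 1 : MvPolynomial (Fin 4) ℂ) ^ 2) by
          unfold mon; rw [pow_add]; ring]
      exact Ideal.mul_mem_left _ _ memF2
  · rcases b with _ | _ | b
    · -- a = 1, b = 0
      show mon 1 0 c w - (if c = 0 ∧ w < p then mon 1 0 0 w else 0) ∈ Ip p
      split_ifs with h1
      · obtain ⟨rfl, -⟩ := h1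
        rw [sub_self]; exact Ideal.zero_mem _
      · rw [sub_zero]; exact memE_gen c w (by omega)
    · -- a = 1, b = 1
      show mon 1 1 c w - (if c = 0 ∧ w < p then (-(Cconst p)) • mon 0 0 0 (w + (2 * p - 1)) else 0)
        ∈ Ip p
      split_ifs with h1
      · obtain ⟨rfl, hw⟩ := h1
        have hid : mon 1 1 0 w - (-(Cconst p)) • mon 0 0 0 (w + (2 * p - 1))
            = X 3 ^ w * ((X 0 : MvPolynomial (Fin 4) ℂ) * X 1
              + C (Cconst p) * X 3 ^ (2 * p - 1)) := by
          unfold mon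
          rw [MvPolynomial.smul_eq_C_mul, map_neg, pow_add]
          ring
        rw [hid]
        exact Ideal.mul_mem_left _ _ memEF
      · rw [sub_zero]; exact memEF_pow c w (by omega)
    · -- a = 1, b ≥ 2
      show mon 1 (b + 2) c w - 0 ∈ Ip p
      rw [sub_zero, show mon 1 (b + 2) c w
        = (X 0 * X 1 ^ b * X 2 ^ c * X 3 ^ w) * ((X 1 : MvPolynomial (Fin 4) ℂ) ^ 2) by
          unfold mon; rw [pow_add]; ring]
      exact Ideal.mul_mem_left _ _ memF2
  · -- a ≥ 2
    have key : ∀ b, mon (a + 2) b c w - 0 ∈ Ip p := by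
      intro b
      rw [sub_zero, show mon (a + 2) b c w
        = (X 0 ^ a * X 1 ^ b * X 2 ^ c * X 3 ^ w) * ((X 0 : MvPolynomial (Fin 4) ℂ) ^ 2) by
          unfold mon; rw [pow_add]; ring]
      exact Ideal.mul_mem_left _ _ memE2
    rcases b with _ | _ | b
    · exact key 0
    · exact key 1
    · exact key (b + 2)

/-- the reduction operator, as a linear map defined on the monomial basis -/
noncomputable def rho (p : ℕ) : MvPolynomial (Fin 4) ℂ →ₗ[ℂ] MvPolynomial (Fin 4) ℂ :=
  (basisMonomials (Fin 4) ℂ).constr ℂ (fun d : Fin 4 →₀ ℕ => nf p (d 0) (d 1) (d 2) (d 3))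

lemma rho_monomial (d : Fin 4 →₀ ℕ) :
    rho p (monomial d 1) = nf p (d 0) (d 1) (d 2) (d 3) := by
  have h : (monomial d 1 : MvPolynomial (Fin 4) ℂ) = basisMonomials (Fin 4) ℂ d := by
    rw [coe_basisMonomials]
  rw [h, rho, Module.Basis.constr_basis]

lemma monomial_smul_one (d : Fin 4 →₀ ℕ) (c : ℂ) :
    (monomial d c : MvPolynomial (Fin 4) ℂ) = c • monomial d 1 := by
  rw [MvPolynomial.smul_monomial, smul_eq_mul, mul_one]

lemma rho_monomial' (d : Fin 4 →₀ ℕ) (c : ℂ) :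
    rho p (monomial d c) = c • nf p (d 0) (d 1) (d 2) (d 3) := by
  rw [monomial_smul_one, map_smul, rho_monomial]

lemma single_add_apply (d : Fin 4 →₀ ℕ) (i : Fin 4) (k : ℕ) (j : Fin 4) :
    (d + Finsupp.single i k) j = d j + if i = j then k else 0 := by
  simp [Finsupp.single_apply]

lemma s00 (k : ℕ) : (Finsupp.single (0:Fin 4) k) 0 = k := Finsupp.single_eq_same
lemma s01 (k : ℕ) : (Finsupp.single (0:Fin 4) k) 1 = 0 := Finsupp.single_eq_of_ne (by decide)
lemma s02 (k : ℕ) : (Finsupp.single (0:Fin 4) k) 2 = 0 := Finsupp.single_eq_of_ne (by decide)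
lemma s03 (k : ℕ) : (Finsupp.single (0:Fin 4) k) 3 = 0 := Finsupp.single_eq_of_ne (by decide)
lemma s10 (k : ℕ) : (Finsupp.single (1:Fin 4) k) 0 = 0 := Finsupp.single_eq_of_ne (by decide)
lemma s11 (k : ℕ) : (Finsupp.single (1:Fin 4) k) 1 = k := Finsupp.single_eq_same
lemma s12 (k : ℕ) : (Finsupp.single (1:Fin 4) k) 2 = 0 := Finsupp.single_eq_of_ne (by decide)
lemma s13 (k : ℕ) : (Finsupp.single (1:Fin 4) k) 3 = 0 := Finsupp.single_eq_of_ne (by decide)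
lemma s20 (k : ℕ) : (Finsupp.single (2:Fin 4) k) 0 = 0 := Finsupp.single_eq_of_ne (by decide)
lemma s21 (k : ℕ) : (Finsupp.single (2:Fin 4) k) 1 = 0 := Finsupp.single_eq_of_ne (by decide)
lemma s22 (k : ℕ) : (Finsupp.single (2:Fin 4) k) 2 = k := Finsupp.single_eq_same
lemma s23 (k : ℕ) : (Finsupp.single (2:Fin 4) k) 3 = 0 := Finsupp.single_eq_of_ne (by decide)
lemma s30 (k : ℕ) : (Finsupp.single (3:Fin 4) k) 0 = 0 := Finsupp.single_eq_of_ne (by decide)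
lemma s31 (k : ℕ) : (Finsupp.single (3:Fin 4) k) 1 = 0 := Finsupp.single_eq_of_ne (by decide)
lemma s32 (k : ℕ) : (Finsupp.single (3:Fin 4) k) 2 = 0 := Finsupp.single_eq_of_ne (by decide)
lemma s33 (k : ℕ) : (Finsupp.single (3:Fin 4) k) 3 = k := Finsupp.single_eq_same

lemma mul_single (d : Fin 4 →₀ ℕ) (i : Fin 4) (k : ℕ) :
    (monomial d 1 : MvPolynomial (Fin 4) ℂ) * X i ^ k = monomial (d + Finsupp.single i k) 1 := by
  rw [X_pow_eq_monomial, monomial_mul, one_mul]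

lemma mul_single2 (d : Fin 4 →₀ ℕ) (i : Fin 4) (k : ℕ) (j : Fin 4) (l : ℕ) :
    (monomial d 1 : MvPolynomial (Fin 4) ℂ) * (X i ^ k * X j ^ l)
      = monomial (d + Finsupp.single i k + Finsupp.single j l) 1 := by
  rw [← mul_assoc, mul_single, mul_single]

lemma mul_Cmul (d : Fin 4 →₀ ℕ) (a : ℂ) (k : ℕ) :
    (monomial d 1 : MvPolynomial (Fin 4) ℂ) * (C a * X 3 ^ k)
      = monomial (d + Finsupp.single 3 k) a := by
  rw [X_pow_eq_monomial, mul_comm (C a), ← mul_assoc, monomial_mul, one_mul, mul_comm,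
    C_mul_monomial, mul_one]

section Kill

variable (hp : 2 ≤ p)
include hp

lemma kill1 (d : Fin 4 →₀ ℕ) : rho p (monomial d 1 * (X 3 ^ (3 * p - 1))) = 0 := by
  rw [mul_single, rho_monomial]
  simp only [Finsupp.add_apply, s00, s01, s02, s03, s10, s11, s12, s13, s20, s21, s22, s23, s30, s31, s32, s33, add_zero]
  exact nf_L1 hp _ _ _ _

lemma kill2 (d : Fin 4 →₀ ℕ) : rho p (monomial d 1 * (X 0 ^ 2)) = 0 := by
  rw [mul_single, rho_monomial]
  simp only [Finsupp.add_apply, s00, s01, s02, s03, s10, s11, s12, s13, s20, s21, s22, s23, s30, s31, s32, s33, add_zero]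
  exact nf_L2 hp _ _ _ _

lemma kill3 (d : Fin 4 →₀ ℕ) : rho p (monomial d 1 * (X 1 ^ 2)) = 0 := by
  rw [mul_single, rho_monomial]
  simp only [Finsupp.add_apply, s00, s01, s02, s03, s10, s11, s12, s13, s20, s21, s22, s23, s30, s31, s32, s33, add_zero]
  exact nf_L3 hp _ _ _ _

lemma kill4 (d : Fin 4 →₀ ℕ) : rho p (monomial d 1 * (X 0 * X 2)) = 0 := by
  rw [show (X 0 * X 2 : MvPolynomial (Fin 4) ℂ) = X 0 ^ 1 * X 2 ^ 1 by
    rw [pow_one, pow_one], mul_single2, rho_monomial]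
  simp only [Finsupp.add_apply, s00, s01, s02, s03, s10, s11, s12, s13, s20, s21, s22, s23, s30, s31, s32, s33, add_zero]
  exact nf_L4 hp _ _ _ _

lemma kill5 (d : Fin 4 →₀ ℕ) : rho p (monomial d 1 * (X 1 * X 2)) = 0 := by
  rw [show (X 1 * X 2 : MvPolynomial (Fin 4) ℂ) = X 1 ^ 1 * X 2 ^ 1 by
    rw [pow_one, pow_one], mul_single2, rho_monomial]
  simp only [Finsupp.add_apply, s00, s01, s02, s03, s10, s11, s12, s13, s20, s21, s22, s23, s30, s31, s32, s33, add_zero]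
  exact nf_L5 hp _ _ _ _

lemma kill6 (d : Fin 4 →₀ ℕ) : rho p (monomial d 1 * (X 3 ^ p * X 0)) = 0 := by
  rw [show (X 3 ^ p * X 0 : MvPolynomial (Fin 4) ℂ) = X 3 ^ p * X 0 ^ 1 by
    rw [pow_one], mul_single2, rho_monomial]
  simp only [Finsupp.add_apply, s00, s01, s02, s03, s10, s11, s12, s13, s20, s21, s22, s23, s30, s31, s32, s33, add_zero]
  exact nf_L6 hp _ _ _ _

lemma kill7 (d : Fin 4 →₀ ℕ) : rho p (monomial d 1 * (X 3 ^ p * X 1)) = 0 := by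
  rw [show (X 3 ^ p * X 1 : MvPolynomial (Fin 4) ℂ) = X 3 ^ p * X 1 ^ 1 by
    rw [pow_one], mul_single2, rho_monomial]
  simp only [Finsupp.add_apply, s00, s01, s02, s03, s10, s11, s12, s13, s20, s21, s22, s23, s30, s31, s32, s33, add_zero]
  exact nf_L7 hp _ _ _ _

lemma kill8 (d : Fin 4 →₀ ℕ) : rho p (monomial d 1 * (X 3 ^ p * X 2)) = 0 := by
  rw [show (X 3 ^ p * X 2 : MvPolynomial (Fin 4) ℂ) = X 3 ^ p * X 2 ^ 1 by
    rw [pow_one], mul_single2, rho_monomial]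
  simp only [Finsupp.add_apply, s00, s01, s02, s03, s10, s11, s12, s13, s20, s21, s22, s23, s30, s31, s32, s33, add_zero]
  exact nf_L8 hp _ _ _ _

lemma kill9 (d : Fin 4 →₀ ℕ) :
    rho p (monomial d 1 * ((X 2 : MvPolynomial (Fin 4) ℂ) ^ 2
      - C (Cconst p) * X 3 ^ (2 * p - 1))) = 0 := by
  rw [mul_sub, mul_single, mul_Cmul, map_sub, rho_monomial, rho_monomial']
  simp only [Finsupp.add_apply, s00, s01, s02, s03, s10, s11, s12, s13, s20, s21, s22, s23, s30, s31, s32, s33, add_zero]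
  rw [nf_L9 hp, sub_self]

lemma kill10 (d : Fin 4 →₀ ℕ) :
    rho p (monomial d 1 * ((X 0 : MvPolynomial (Fin 4) ℂ) * X 1
      + C (Cconst p) * X 3 ^ (2 * p - 1))) = 0 := by
  rw [mul_add, show (X 0 * X 1 : MvPolynomial (Fin 4) ℂ) = X 0 ^ 1 * X 1 ^ 1 by
    rw [pow_one, pow_one], mul_single2, mul_Cmul, map_add, rho_monomial, rho_monomial']
  simp only [Finsupp.add_apply, s00, s01, s02, s03, s10, s11, s12, s13, s20, s21, s22, s23, s30, s31, s32, s33, add_zero]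
  rw [nf_L10 hp, neg_smul, neg_add_cancel]

end Kill

lemma rho_mul_zero {g : MvPolynomial (Fin 4) ℂ}
    (h : ∀ d : Fin 4 →₀ ℕ, rho p (monomial d 1 * g) = 0) (f : MvPolynomial (Fin 4) ℂ) :
    rho p (f * g) = 0 := by
  induction f using MvPolynomial.induction_on' with
  | monomial u a => rw [monomial_smul_one, smul_mul_assoc, map_smul, h u, smul_zero]
  | add f₁ f₂ hf hg => rw [add_mul, map_add, hf, hg, add_zero]

lemma rho_ideal (hp : 2 ≤ p) {x : MvPolynomial (Fin 4) ℂ} (hx : x ∈ Ip p) : rho p x = 0 := by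
  have key : ∀ f, rho p (f * x) = 0 := by
    refine Submodule.span_induction ?_ ?_ ?_ ?_ hx
    · rintro y (rfl | rfl | rfl | rfl | rfl | rfl | rfl | rfl | rfl | rfl) <;> intro f
      · exact rho_mul_zero (kill1 hp) f
      · exact rho_mul_zero (kill2 hp) f
      · exact rho_mul_zero (kill3 hp) f
      · exact rho_mul_zero (kill4 hp) f
      · exact rho_mul_zero (kill5 hp) f
      · exact rho_mul_zero (kill6 hp) f
      · exact rho_mul_zero (kill7 hp) f
      · exact rho_mul_zero (kill8 hp) f
      · exact rho_mul_zero (kill9 hp) f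
      · exact rho_mul_zero (kill10 hp) f
    · intro f; rw [mul_zero, map_zero]
    · intro y z _ _ hy hz f
      rw [mul_add, map_add, hy, hz, add_zero]
    · intro a y _ hy f
      rw [smul_eq_mul, show f * (a * y) = (f * a) * y by ring, hy]
  simpa using key 1

/-- index type for the monomial basis of the quotient -/
abbrev Idx (p : ℕ) : Type := Fin (3 * p - 1) ⊕ (Fin p ⊕ (Fin p ⊕ Fin p))

/-- exponents of the basis monomials -/
noncomputable def expo (p : ℕ) : Idx p → (Fin 4 →₀ ℕ)
  | .inl j => Finsupp.single 3 j.val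
  | .inr (.inl j) => Finsupp.single 0 1 + Finsupp.single 3 j.val
  | .inr (.inr (.inl j)) => Finsupp.single 1 1 + Finsupp.single 3 j.val
  | .inr (.inr (.inr j)) => Finsupp.single 2 1 + Finsupp.single 3 j.val

noncomputable def wfam (p : ℕ) : Idx p → MvPolynomial (Fin 4) ℂ :=
  fun i => monomial (expo p i) 1

lemma expo_inj (p : ℕ) : Function.Injective (expo p) := by
  intro i j h
  have h0 : expo p i 0 = expo p j 0 := by rw [h]
  have h1 : expo p i 1 = expo p j 1 := by rw [h]
  have h2 : expo p i 2 = expo p j 2 := by rw [h]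
  have h3 : expo p i 3 = expo p j 3 := by rw [h]
  rcases i with i | i | i | i <;> rcases j with j | j | j | j <;>
    simp only [expo, Finsupp.add_apply, s00, s01, s02, s03, s10, s11, s12, s13,
      s20, s21, s22, s23, s30, s31, s32, s33, add_zero, zero_add] at h0 h1 h2 h3 <;>
    first
      | (exact absurd h0 (by omega))
      | (exact absurd h1 (by omega))
      | (exact absurd h2 (by omega))
      | (rw [show i = j from Fin.ext h3])

lemma wfam_li (p : ℕ) : LinearIndependent ℂ (wfam p) := by
  have h := (basisMonomials (Fin 4) ℂ).linearIndependent
  have : wfam p = (basisMonomials (Fin 4) ℂ) ∘ (expo p) := by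
    funext i; simp [wfam, coe_basisMonomials]
  rw [this]
  exact h.comp _ (expo_inj p)

-- conversions between `mon` and `monomial (expo _)`
lemma monomial_expo_W (p : ℕ) (j : ℕ) :
    (monomial (Finsupp.single (3 : Fin 4) j) 1 : MvPolynomial (Fin 4) ℂ) = mon 0 0 0 j := by
  rw [mon000, X_pow_eq_monomial]

lemma monomial_expo_E (p : ℕ) (j : ℕ) :
    (monomial (Finsupp.single (0 : Fin 4) 1 + Finsupp.single (3 : Fin 4) j) 1 :
      MvPolynomial (Fin 4) ℂ) = mon 1 0 0 j := by
  rw [mon100, ← pow_one (X 0 : MvPolynomial (Fin 4) ℂ), X_pow_eq_monomial, X_pow_eq_monomial,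
    monomial_mul, one_mul]

lemma monomial_expo_F (p : ℕ) (j : ℕ) :
    (monomial (Finsupp.single (1 : Fin 4) 1 + Finsupp.single (3 : Fin 4) j) 1 :
      MvPolynomial (Fin 4) ℂ) = mon 0 1 0 j := by
  rw [mon010, ← pow_one (X 1 : MvPolynomial (Fin 4) ℂ), X_pow_eq_monomial, X_pow_eq_monomial,
    monomial_mul, one_mul]

lemma monomial_expo_H (p : ℕ) (j : ℕ) :
    (monomial (Finsupp.single (2 : Fin 4) 1 + Finsupp.single (3 : Fin 4) j) 1 :
      MvPolynomial (Fin 4) ℂ) = mon 0 0 1 j := by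
  rw [mon001, ← pow_one (X 2 : MvPolynomial (Fin 4) ℂ), X_pow_eq_monomial, X_pow_eq_monomial,
    monomial_mul, one_mul]

-- values of nf on basis exponents
lemma nf_W (j : ℕ) (hj : j < 3 * p - 1) : nf p 0 0 0 j = mon 0 0 0 j := by
  show nfH p 0 j = _
  unfold nfH
  simp only [Nat.zero_div, Nat.zero_mod, pow_zero, one_smul, Nat.mul_zero, Nat.add_zero,
    Nat.zero_ne_one, if_false]
  rw [if_pos hj]

lemma nf_E (j : ℕ) (hj : j < p) : nf p 1 0 0 j = mon 1 0 0 j := by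
  show (if 0 = 0 ∧ j < p then mon 1 0 0 j else 0) = mon 1 0 0 j
  rw [if_pos ⟨rfl, hj⟩]

lemma nf_F (j : ℕ) (hj : j < p) : nf p 0 1 0 j = mon 0 1 0 j := by
  show (if 0 = 0 ∧ j < p then mon 0 1 0 j else 0) = mon 0 1 0 j
  rw [if_pos ⟨rfl, hj⟩]

lemma nf_H (j : ℕ) (hj : j < p) : nf p 0 0 1 j = mon 0 0 1 j := by
  show nfH p 1 j = _
  unfold nfH
  rw [show (1:ℕ) / 2 = 0 from rfl, show (1:ℕ) % 2 = 1 from rfl, if_pos rfl, Nat.mul_zero,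
    Nat.add_zero, pow_zero, one_smul, if_pos hj]

lemma rho_wfam (i : Idx p) : rho p (wfam p i) = wfam p i := by
  rcases i with j | j | j | j <;>
    (rw [wfam, rho_monomial]
     simp only [expo, Finsupp.add_apply, s00, s01, s02, s03, s10, s11, s12, s13,
       s20, s21, s22, s23, s30, s31, s32, s33, add_zero, zero_add])
  · rw [nf_W j.val j.isLt, ← monomial_expo_W p]
  · rw [nf_E j.val j.isLt, ← monomial_expo_E p]
  · rw [nf_F j.val j.isLt, ← monomial_expo_F p]
  · rw [nf_H j.val j.isLt, ← monomial_expo_H p]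

lemma rho_fix {x : MvPolynomial (Fin 4) ℂ}
    (hx : x ∈ Submodule.span ℂ (Set.range (wfam p))) : rho p x = x := by
  refine Submodule.span_induction ?_ ?_ ?_ ?_ hx
  · rintro y ⟨i, rfl⟩; exact rho_wfam i
  · exact map_zero _
  · intro y z _ _ hy hz; rw [map_add, hy, hz]
  · intro a y _ hy; rw [map_smul, hy]

lemma nf_mem_span (hp : 2 ≤ p) (a b c w : ℕ) :
    nf p a b c w ∈ Submodule.span ℂ (Set.range (wfam p)) := by
  have hW : ∀ j, j < 3 * p - 1 → mon 0 0 0 j ∈ Submodule.span ℂ (Set.range (wfam p)) := by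
    intro j hj
    exact Submodule.subset_span ⟨Sum.inl ⟨j, hj⟩, monomial_expo_W p j⟩
  have hE : ∀ j, j < p → mon 1 0 0 j ∈ Submodule.span ℂ (Set.range (wfam p)) := by
    intro j hj
    exact Submodule.subset_span ⟨Sum.inr (Sum.inl ⟨j, hj⟩), monomial_expo_E p j⟩
  have hF : ∀ j, j < p → mon 0 1 0 j ∈ Submodule.span ℂ (Set.range (wfam p)) := by
    intro j hj
    exact Submodule.subset_span ⟨Sum.inr (Sum.inr (Sum.inl ⟨j, hj⟩)), monomial_expo_F p j⟩
  have hH : ∀ j, j < p → mon 0 0 1 j ∈ Submodule.span ℂ (Set.range (wfam p)) := by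
    intro j hj
    exact Submodule.subset_span ⟨Sum.inr (Sum.inr (Sum.inr ⟨j, hj⟩)), monomial_expo_H p j⟩
  rcases a with _ | _ | a
  · rcases b with _ | _ | b
    · show nfH p c w ∈ _
      unfold nfH
      split_ifs with h1 h2 h3
      · exact Submodule.smul_mem _ _ (hH _ h2)
      · exact Submodule.smul_mem _ _ (Submodule.zero_mem _)
      · exact Submodule.smul_mem _ _ (hW _ h3)
      · exact Submodule.smul_mem _ _ (Submodule.zero_mem _)
    · show (if c = 0 ∧ w < p then mon 0 1 0 w else 0) ∈ _
      split_ifs with h1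
      · exact hF _ h1.2
      · exact Submodule.zero_mem _
    · show (0 : MvPolynomial (Fin 4) ℂ) ∈ _
      exact Submodule.zero_mem _
  · rcases b with _ | _ | b
    · show (if c = 0 ∧ w < p then mon 1 0 0 w else 0) ∈ _
      split_ifs with h1
      · exact hE _ h1.2
      · exact Submodule.zero_mem _
    · show (if c = 0 ∧ w < p then (-(Cconst p)) • mon 0 0 0 (w + (2 * p - 1)) else 0) ∈ _
      split_ifs with h1
      · exact Submodule.smul_mem _ _ (hW _ (by omega))
      · exact Submodule.zero_mem _
    · show (0 : MvPolynomial (Fin 4) ℂ) ∈ _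
      exact Submodule.zero_mem _
  · rcases b with _ | _ | b <;>
      (show (0 : MvPolynomial (Fin 4) ℂ) ∈ _; exact Submodule.zero_mem _)

lemma monomial_eq_mon (d : Fin 4 →₀ ℕ) :
    (monomial d 1 : MvPolynomial (Fin 4) ℂ) = mon (d 0) (d 1) (d 2) (d 3) := by
  rw [monomial_eq, C_1, one_mul, Finsupp.prod_fintype _ _ (fun i => pow_zero _)]
  show ∏ i : Fin 4, X i ^ d i = _
  rw [Fin.prod_univ_four]
  rfl

noncomputable def mkl (p : ℕ) :
    MvPolynomial (Fin 4) ℂ →ₗ[ℂ] (MvPolynomial (Fin 4) ℂ ⧸ Ip p) :=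
  (Ideal.Quotient.mkₐ ℂ (Ip p)).toLinearMap

lemma vfam_li (hp : 2 ≤ p) : LinearIndependent ℂ ((mkl p) ∘ (wfam p)) := by
  refine (wfam_li p).map ?_
  rw [Submodule.disjoint_def]
  intro x hx hker
  have h1 : rho p x = x := rho_fix hx
  have h2 : x ∈ Ip p := by
    have := (LinearMap.mem_ker.mp hker)
    rwa [mkl, AlgHom.toLinearMap_apply, Ideal.Quotient.mkₐ_eq_mk,
      Ideal.Quotient.eq_zero_iff_mem] at this
  rw [← h1]
  exact rho_ideal hp h2

lemma vfam_span (hp : 2 ≤ p) :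
    ⊤ ≤ Submodule.span ℂ (Set.range ((mkl p) ∘ (wfam p))) := by
  intro x _
  obtain ⟨f, rfl⟩ : ∃ f, mkl p f = x := by
    obtain ⟨f, hf⟩ := Ideal.Quotient.mk_surjective (I := Ip p) x
    exact ⟨f, hf⟩
  induction f using MvPolynomial.induction_on' with
  | monomial u a =>
    rw [monomial_smul_one, map_smul]
    refine Submodule.smul_mem _ _ ?_
    have heq : mkl p (monomial u 1) = mkl p (nf p (u 0) (u 1) (u 2) (u 3)) := by
      simp only [mkl, AlgHom.toLinearMap_apply, Ideal.Quotient.mkₐ_eq_mk]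
      rw [Ideal.Quotient.eq, monomial_eq_mon]
      exact P1 hp _ _ _ _
    rw [heq]
    have h2 := Submodule.apply_mem_span_image_of_mem_span (mkl p)
      (nf_mem_span hp (u 0) (u 1) (u 2) (u 3))
    rwa [← Set.range_comp] at h2
  | add f₁ f₂ hf₁ hf₂ =>
    rw [map_add]
    exact Submodule.add_mem _ (hf₁ trivial) (hf₂ trivial)

noncomputable def quotBasis (hp : 2 ≤ p) :
    Module.Basis (Idx p) ℂ (MvPolynomial (Fin 4) ℂ ⧸ Ip p) :=
  Module.Basis.mk (vfam_li hp) (vfam_span hp)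

end Stmt3Aux


/-- `R_p = ℂ[E,F,H,W]/I_p` is a finite-dimensional ℂ-vector space
of dimension `6p - 1`. -/
theorem stmt_3 (p : ℕ) (hp : 2 ≤ p) :
    FiniteDimensional ℂ (MvPolynomial (Fin 4) ℂ ⧸ Ip p) ∧
      Module.finrank ℂ (MvPolynomial (Fin 4) ℂ ⧸ Ip p) = 6 * p - 1 := by
  have b := Stmt3Aux.quotBasis hp
  have hfd : FiniteDimensional ℂ (MvPolynomial (Fin 4) ℂ ⧸ Ip p) :=
    Module.Finite.of_basis b
  refine ⟨hfd, ?_⟩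
  rw [Module.finrank_eq_card_basis b]
  simp only [Stmt3Aux.Idx, Fintype.card_sum, Fintype.card_fin]
  omega
end

section
/- Let p ≥ 2 be an integer. The algebra B_p is a finite-dimensional ℂ-vector space of dimension 8p − 6; a ℂ-basis is given by the 2p idempotents e_s^±, the 4(p−1) elements a_{s,1}, a_{s,2}, b_{s,1}, b_{s,2} (1 ≤ s ≤ p−1), and the 2(p−1) elements b_{s,2}a_{s,1} and a_{s,2}b_{s,1} (1 ≤ s ≤ p−1). -/
open FreeAlgebra CategoryTheory

/-- Generators of the algebra `B_p`: idempotents `e_s^±` (the sign `+` is encoded by `true`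
and `-` by `false`) and arrows `a_{s,i}`, `b_{s,i}` (the indices `1, 2` are encoded by
`0, 1 : Fin 2`). -/
inductive BGen (p : ℕ) : Type
  | e : Fin p → Bool → BGen p
  | a : Fin (p - 1) → Fin 2 → BGen p
  | b : Fin (p - 1) → Fin 2 → BGen p

/-- The inclusion `Fin (p-1) → Fin p`. -/
def finIncl {p : ℕ} (s : Fin (p - 1)) : Fin p := Fin.castLE (Nat.sub_le p 1) s

/-- The generators, as elements of the free algebra. -/
noncomputable def gE (p : ℕ) (s : Fin p) (σ : Bool) : FreeAlgebra ℂ (BGen p) :=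
  ι ℂ (BGen.e s σ)

noncomputable def gA (p : ℕ) (s : Fin (p - 1)) (i : Fin 2) : FreeAlgebra ℂ (BGen p) :=
  ι ℂ (BGen.a s i)

noncomputable def gB (p : ℕ) (s : Fin (p - 1)) (i : Fin 2) : FreeAlgebra ℂ (BGen p) :=
  ι ℂ (BGen.b s i)

/-- The defining relations of `B_p`: the `e`'s are pairwise orthogonal idempotents whose sum
is `1`; `a_{s,i} = e_s⁻ a_{s,i} e_s⁺` and `b_{s,i} = e_s⁺ b_{s,i} e_s⁻` for all `s, i`; and
`b_{s,1}a_{s,1} = b_{s,2}a_{s,2} = 0`, `b_{s,2}a_{s,1} = b_{s,1}a_{s,2}`,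
`a_{s,1}b_{s,1} = a_{s,2}b_{s,2} = 0`, `a_{s,2}b_{s,1} = a_{s,1}b_{s,2}`. -/
inductive BRel (p : ℕ) : FreeAlgebra ℂ (BGen p) → FreeAlgebra ℂ (BGen p) → Prop
  | orth (s t : Fin p) (σ τ : Bool) :
      BRel p (gE p s σ * gE p t τ) (if s = t ∧ σ = τ then gE p s σ else 0)
  | sum_eq_one : BRel p (∑ s : Fin p, (gE p s true + gE p s false)) 1
  | a_sandwich (s : Fin (p - 1)) (i : Fin 2) :
      BRel p (gA p s i) (gE p (finIncl s) false * gA p s i * gE p (finIncl s) true)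
  | b_sandwich (s : Fin (p - 1)) (i : Fin 2) :
      BRel p (gB p s i) (gE p (finIncl s) true * gB p s i * gE p (finIncl s) false)
  | ba_11 (s : Fin (p - 1)) : BRel p (gB p s 0 * gA p s 0) 0
  | ba_22 (s : Fin (p - 1)) : BRel p (gB p s 1 * gA p s 1) 0
  | ba_21 (s : Fin (p - 1)) : BRel p (gB p s 1 * gA p s 0) (gB p s 0 * gA p s 1)
  | ab_11 (s : Fin (p - 1)) : BRel p (gA p s 0 * gB p s 0) 0
  | ab_22 (s : Fin (p - 1)) : BRel p (gA p s 1 * gB p s 1) 0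
  | ab_21 (s : Fin (p - 1)) : BRel p (gA p s 1 * gB p s 0) (gA p s 0 * gB p s 1)

/-- The algebra `B_p`, presented by the above generators and relations. -/
abbrev Balg (p : ℕ) : Type := RingQuot (BRel p)

/-- The images of the generators in `B_p`. -/
noncomputable def bE (p : ℕ) (s : Fin p) (σ : Bool) : Balg p :=
  RingQuot.mkAlgHom ℂ (BRel p) (gE p s σ)

noncomputable def bA (p : ℕ) (s : Fin (p - 1)) (i : Fin 2) : Balg p :=
  RingQuot.mkAlgHom ℂ (BRel p) (gA p s i)

noncomputable def bB (p : ℕ) (s : Fin (p - 1)) (i : Fin 2) : Balg p :=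
  RingQuot.mkAlgHom ℂ (BRel p) (gB p s i)


/-- The index set of the claimed basis of `B_p`: the `2p` idempotents `e_s^±`, the `4(p-1)`
arrows `a_{s,1}, a_{s,2}, b_{s,1}, b_{s,2}`, and the `2(p-1)` paths `b_{s,2}a_{s,1}` and
`a_{s,2}b_{s,1}`. -/
inductive BIdx (p : ℕ) : Type
  | e : Fin p → Bool → BIdx p
  | a : Fin (p - 1) → Fin 2 → BIdx p
  | b : Fin (p - 1) → Fin 2 → BIdx p
  | ba : Fin (p - 1) → BIdx p
  | ab : Fin (p - 1) → BIdx p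

/-- The claimed basis vectors of `B_p`. -/
noncomputable def basisElt (p : ℕ) : BIdx p → Balg p
  | .e s σ => bE p s σ
  | .a s i => bA p s i
  | .b s i => bB p s i
  | .ba s => bB p s 1 * bA p s 0
  | .ab s => bA p s 1 * bB p s 0

deriving instance DecidableEq for BIdx
deriving instance Fintype for BIdx

namespace Stmt13

variable {p : ℕ}

/-- Target (head idempotent) of a basis path. -/
def tgt {p : ℕ} : BIdx p → Fin p × Bool
  | .e s σ => (s, σ)
  | .a s _ => (finIncl s, false)
  | .b s _ => (finIncl s, true)
  | .ba s => (finIncl s, true)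
  | .ab s => (finIncl s, false)

/-- Source (tail idempotent) of a basis path. -/
def srcI {p : ℕ} : BIdx p → Fin p × Bool
  | .e s σ => (s, σ)
  | .a s _ => (finIncl s, true)
  | .b s _ => (finIncl s, false)
  | .ba s => (finIncl s, true)
  | .ab s => (finIncl s, false)

/-- Left multiplication of a generator on a basis path, as a partial function on indices. -/
def mulGen {p : ℕ} : BGen p → BIdx p → Option (BIdx p)
  | .e s σ, k => if (s, σ) = tgt k then some k else none
  | .a s i, .e t τ => if (finIncl s, true) = (t, τ) then some (.a s i) else none
  | .a s i, .b t j => if t = s ∧ i ≠ j then some (.ab s) else none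
  | .a _ _, _ => none
  | .b s i, .e t τ => if (finIncl s, false) = (t, τ) then some (.b s i) else none
  | .b s i, .a t j => if t = s ∧ i ≠ j then some (.ba s) else none
  | .b _ _, _ => none

lemma finIncl_inj {s t : Fin (p - 1)} (h : finIncl s = finIncl t) : s = t :=
  Fin.ext (by simpa [finIncl] using congrArg Fin.val h)

lemma mkA_rel {x y : FreeAlgebra ℂ (BGen p)} (h : BRel p x y) :
    RingQuot.mkAlgHom ℂ (BRel p) x = RingQuot.mkAlgHom ℂ (BRel p) y :=
  RingQuot.mkAlgHom_rel ℂ h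

lemma ab11 (s : Fin (p - 1)) : bA p s 0 * bB p s 0 = 0 := by
  have h := mkA_rel (BRel.ab_11 (p := p) s); rw [map_mul, map_zero] at h
  rw [bA, bB]; exact h

lemma ab22 (s : Fin (p - 1)) : bA p s 1 * bB p s 1 = 0 := by
  have h := mkA_rel (BRel.ab_22 (p := p) s); rw [map_mul, map_zero] at h
  rw [bA, bB]; exact h

lemma ab21 (s : Fin (p - 1)) : bA p s 1 * bB p s 0 = bA p s 0 * bB p s 1 := by
  have h := mkA_rel (BRel.ab_21 (p := p) s); rw [map_mul, map_mul] at h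
  rw [bA, bB, bA, bB]; exact h

lemma ba11 (s : Fin (p - 1)) : bB p s 0 * bA p s 0 = 0 := by
  have h := mkA_rel (BRel.ba_11 (p := p) s); rw [map_mul, map_zero] at h
  rw [bA, bB]; exact h

lemma ba22 (s : Fin (p - 1)) : bB p s 1 * bA p s 1 = 0 := by
  have h := mkA_rel (BRel.ba_22 (p := p) s); rw [map_mul, map_zero] at h
  rw [bA, bB]; exact h

lemma ba21 (s : Fin (p - 1)) : bB p s 1 * bA p s 0 = bB p s 0 * bA p s 1 := by
  have h := mkA_rel (BRel.ba_21 (p := p) s); rw [map_mul, map_mul] at h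
  rw [bA, bB, bA, bB]; exact h

/- ### Multiplication rules in `Balg p` -/

lemma bE_mul_bE (s t : Fin p) (σ τ : Bool) :
    bE p s σ * bE p t τ = if (s, σ) = (t, τ) then bE p t τ else 0 := by
  have h := RingQuot.mkAlgHom_rel ℂ (BRel.orth (p := p) s t σ τ)
  rw [map_mul] at h
  simp only [bE]
  rw [h]
  by_cases hc : s = t ∧ σ = τ
  · obtain ⟨rfl, rfl⟩ := hc
    rw [if_pos ⟨rfl, rfl⟩, if_pos rfl]
  · rw [if_neg hc, if_neg (by simpa [Prod.ext_iff] using hc), map_zero]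

lemma bA_sand (s : Fin (p - 1)) (i : Fin 2) :
    bA p s i = bE p (finIncl s) false * bA p s i * bE p (finIncl s) true := by
  have h := RingQuot.mkAlgHom_rel ℂ (BRel.a_sandwich (p := p) s i)
  simpa only [map_mul, bA, bE] using h

lemma bB_sand (s : Fin (p - 1)) (i : Fin 2) :
    bB p s i = bE p (finIncl s) true * bB p s i * bE p (finIncl s) false := by
  have h := RingQuot.mkAlgHom_rel ℂ (BRel.b_sandwich (p := p) s i)
  simpa only [map_mul, bB, bE] using h

lemma bE_mul_bA (s : Fin p) (σ : Bool) (t : Fin (p - 1)) (i : Fin 2) :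
    bE p s σ * bA p t i = if (s, σ) = (finIncl t, false) then bA p t i else 0 := by
  conv_lhs => rw [bA_sand t i]
  rw [← mul_assoc, ← mul_assoc, bE_mul_bE]
  split_ifs with h
  · obtain ⟨h1, h2⟩ := Prod.mk.injEq .. ▸ h
    subst h1; subst h2
    rw [← bA_sand]
  · rw [zero_mul, zero_mul]

lemma bE_mul_bB (s : Fin p) (σ : Bool) (t : Fin (p - 1)) (i : Fin 2) :
    bE p s σ * bB p t i = if (s, σ) = (finIncl t, true) then bB p t i else 0 := by
  conv_lhs => rw [bB_sand t i]
  rw [← mul_assoc, ← mul_assoc, bE_mul_bE]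
  split_ifs with h
  · obtain ⟨h1, h2⟩ := Prod.mk.injEq .. ▸ h
    subst h1; subst h2
    rw [← bB_sand]
  · rw [zero_mul, zero_mul]

lemma bA_mul_bE (s : Fin (p - 1)) (i : Fin 2) (t : Fin p) (τ : Bool) :
    bA p s i * bE p t τ = if (finIncl s, true) = (t, τ) then bA p s i else 0 := by
  conv_lhs => rw [bA_sand s i]
  rw [mul_assoc, mul_assoc, bE_mul_bE]
  split_ifs with h
  · obtain ⟨h1, h2⟩ := Prod.mk.injEq .. ▸ h
    subst h1; subst h2
    rw [← mul_assoc, ← bA_sand]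
  · rw [mul_zero, mul_zero]

lemma bB_mul_bE (s : Fin (p - 1)) (i : Fin 2) (t : Fin p) (τ : Bool) :
    bB p s i * bE p t τ = if (finIncl s, false) = (t, τ) then bB p s i else 0 := by
  conv_lhs => rw [bB_sand s i]
  rw [mul_assoc, mul_assoc, bE_mul_bE]
  split_ifs with h
  · obtain ⟨h1, h2⟩ := Prod.mk.injEq .. ▸ h
    subst h1; subst h2
    rw [← mul_assoc, ← bB_sand]
  · rw [mul_zero, mul_zero]

lemma bA_mul_bA (s : Fin (p - 1)) (i : Fin 2) (t : Fin (p - 1)) (j : Fin 2) :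
    bA p s i * bA p t j = 0 := by
  conv_lhs => rw [bA_sand t j]
  rw [← mul_assoc, ← mul_assoc, bA_mul_bE, if_neg (by simp)]
  rw [zero_mul, zero_mul]

lemma bB_mul_bB (s : Fin (p - 1)) (i : Fin 2) (t : Fin (p - 1)) (j : Fin 2) :
    bB p s i * bB p t j = 0 := by
  conv_lhs => rw [bB_sand t j]
  rw [← mul_assoc, ← mul_assoc, bB_mul_bE, if_neg (by simp)]
  rw [zero_mul, zero_mul]

lemma bA_mul_bB (s : Fin (p - 1)) (i : Fin 2) (t : Fin (p - 1)) (j : Fin 2) :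
    bA p s i * bB p t j = if t = s ∧ i ≠ j then bA p s 1 * bB p s 0 else 0 := by
  by_cases hts : t = s
  · subst hts
    fin_cases i <;> fin_cases j <;> simp only [Fin.zero_eta, Fin.mk_one, Fin.isValue]
    · rw [ab11, if_neg (by simp)]
    · rw [if_pos (show True ∧ (0:Fin 2) ≠ 1 from ⟨trivial, by decide⟩)]; exact (ab21 t).symm
    · rw [if_pos (show True ∧ (1:Fin 2) ≠ 0 from ⟨trivial, by decide⟩)]
    · rw [ab22, if_neg (by simp)]
  · rw [bB_sand t j, ← mul_assoc, ← mul_assoc, bA_mul_bE,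
      if_neg (by simp [Prod.ext_iff]; exact fun h => hts (finIncl_inj h).symm),
      zero_mul, zero_mul, if_neg (by tauto)]

lemma bB_mul_bA (s : Fin (p - 1)) (i : Fin 2) (t : Fin (p - 1)) (j : Fin 2) :
    bB p s i * bA p t j = if t = s ∧ i ≠ j then bB p s 1 * bA p s 0 else 0 := by
  by_cases hts : t = s
  · subst hts
    fin_cases i <;> fin_cases j <;> simp only [Fin.zero_eta, Fin.mk_one, Fin.isValue]
    · rw [ba11, if_neg (by simp)]
    · rw [if_pos (show True ∧ (0:Fin 2) ≠ 1 from ⟨trivial, by decide⟩)]; exact (ba21 t).symm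
    · rw [if_pos (show True ∧ (1:Fin 2) ≠ 0 from ⟨trivial, by decide⟩)]
    · rw [ba22, if_neg (by simp)]
  · rw [bA_sand t j, ← mul_assoc, ← mul_assoc, bB_mul_bE,
      if_neg (by simp [Prod.ext_iff]; exact fun h => hts (finIncl_inj h).symm),
      zero_mul, zero_mul, if_neg (by tauto)]

lemma bE_mul_ba (s : Fin p) (σ : Bool) (t : Fin (p - 1)) :
    bE p s σ * (bB p t 1 * bA p t 0)
      = if (s, σ) = (finIncl t, true) then bB p t 1 * bA p t 0 else 0 := by
  rw [← mul_assoc, bE_mul_bB, ite_mul, zero_mul]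

lemma bE_mul_ab (s : Fin p) (σ : Bool) (t : Fin (p - 1)) :
    bE p s σ * (bA p t 1 * bB p t 0)
      = if (s, σ) = (finIncl t, false) then bA p t 1 * bB p t 0 else 0 := by
  rw [← mul_assoc, bE_mul_bA, ite_mul, zero_mul]

lemma bA_mul_ba (s : Fin (p - 1)) (i : Fin 2) (t : Fin (p - 1)) :
    bA p s i * (bB p t 1 * bA p t 0) = 0 := by
  rw [← mul_assoc, bA_mul_bB, ite_mul, zero_mul]
  split_ifs with h
  · obtain ⟨rfl, -⟩ := h
    rw [mul_assoc, bB_mul_bA, if_neg (by simp), mul_zero]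
  · rfl

lemma bA_mul_ab (s : Fin (p - 1)) (i : Fin 2) (t : Fin (p - 1)) :
    bA p s i * (bA p t 1 * bB p t 0) = 0 := by
  rw [← mul_assoc, bA_mul_bA, zero_mul]

lemma bB_mul_ba (s : Fin (p - 1)) (i : Fin 2) (t : Fin (p - 1)) :
    bB p s i * (bB p t 1 * bA p t 0) = 0 := by
  rw [← mul_assoc, bB_mul_bB, zero_mul]

lemma bB_mul_ab (s : Fin (p - 1)) (i : Fin 2) (t : Fin (p - 1)) :
    bB p s i * (bA p t 1 * bB p t 0) = 0 := by
  rw [← mul_assoc, bB_mul_bA, ite_mul, zero_mul]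
  split_ifs with h
  · obtain ⟨rfl, -⟩ := h
    rw [mul_assoc, bA_mul_bB, if_neg (by simp), mul_zero]
  · rfl

lemma elim_ite {c : Prop} [Decidable c] (a : BIdx p) :
    (if c then some a else none).elim (0 : Balg p) (basisElt p) = if c then basisElt p a else 0 := by
  split_ifs <;> rfl

/-- The image of a generator in `Balg p`. -/
noncomputable def genT (p : ℕ) : BGen p → Balg p
  | .e s σ => bE p s σ
  | .a s i => bA p s i
  | .b s i => bB p s i

lemma genT_eq (g : BGen p) :
    genT p g = RingQuot.mkAlgHom ℂ (BRel p) (FreeAlgebra.ι ℂ g) := by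
  cases g <;> rfl

lemma gen_mul_basis (g : BGen p) (k : BIdx p) :
    genT p g * basisElt p k = (mulGen g k).elim 0 (basisElt p) := by
  cases g with
  | e s σ =>
    cases k with
    | e t τ => rw [genT, basisElt, bE_mul_bE, mulGen, tgt, elim_ite, basisElt]
    | a t i => rw [genT, basisElt, bE_mul_bA, mulGen, tgt, elim_ite, basisElt]
    | b t i => rw [genT, basisElt, bE_mul_bB, mulGen, tgt, elim_ite, basisElt]
    | ba t => rw [genT, basisElt, bE_mul_ba, mulGen, tgt, elim_ite, basisElt]
    | ab t => rw [genT, basisElt, bE_mul_ab, mulGen, tgt, elim_ite, basisElt]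
  | a s i =>
    cases k with
    | e t τ => rw [genT, basisElt, bA_mul_bE, mulGen, elim_ite, basisElt]
    | a t j => rw [genT, basisElt, bA_mul_bA]; simp [mulGen]
    | b t j => rw [genT, basisElt, bA_mul_bB, mulGen, elim_ite, basisElt]
    | ba t => rw [genT, basisElt, bA_mul_ba]; simp [mulGen]
    | ab t => rw [genT, basisElt, bA_mul_ab]; simp [mulGen]
  | b s i =>
    cases k with
    | e t τ => rw [genT, basisElt, bB_mul_bE, mulGen, elim_ite, basisElt]
    | a t j => rw [genT, basisElt, bB_mul_bA, mulGen, elim_ite, basisElt]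
    | b t j => rw [genT, basisElt, bB_mul_bB]; simp [mulGen]
    | ba t => rw [genT, basisElt, bB_mul_ba]; simp [mulGen]
    | ab t => rw [genT, basisElt, bB_mul_ab]; simp [mulGen]

lemma one_eq_sum : (1 : Balg p) = ∑ s : Fin p, (bE p s true + bE p s false) := by
  have h := mkA_rel (BRel.sum_eq_one (p := p))
  rw [map_sum, map_one] at h
  simp only [map_add, bE] at h ⊢
  exact h.symm

/-- The span of the claimed basis. -/
noncomputable def S (p : ℕ) : Submodule ℂ (Balg p) :=
  Submodule.span ℂ (Set.range (basisElt p))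

lemma basis_mem (k : BIdx p) : basisElt p k ∈ S p :=
  Submodule.subset_span ⟨k, rfl⟩

lemma one_mem : (1 : Balg p) ∈ S p := by
  rw [one_eq_sum]
  exact Submodule.sum_mem _ fun s _ =>
    Submodule.add_mem _ (basis_mem (.e s true)) (basis_mem (.e s false))

lemma gen_mul_mem (g : BGen p) {y : Balg p} (hy : y ∈ S p) : genT p g * y ∈ S p := by
  induction hy using Submodule.span_induction with
  | mem x hx =>
    obtain ⟨k, rfl⟩ := hx
    rw [gen_mul_basis]
    cases h : mulGen g k with
    | none => simp only [Option.elim]; exact (S p).zero_mem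
    | some j => simp only [Option.elim]; exact basis_mem j
  | zero => rw [mul_zero]; exact (S p).zero_mem
  | add x y _ _ hx hy => rw [mul_add]; exact (S p).add_mem hx hy
  | smul c x _ hx => rw [mul_smul_comm]; exact (S p).smul_mem c hx

lemma mulMk_mem (z : FreeAlgebra ℂ (BGen p)) :
    ∀ y ∈ S p, RingQuot.mkAlgHom ℂ (BRel p) z * y ∈ S p := by
  induction z using FreeAlgebra.induction with
  | grade0 c =>
    intro y hy
    rw [AlgHom.commutes, ← Algebra.smul_def]
    exact (S p).smul_mem c hy
  | grade1 g =>
    intro y hy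
    rw [← genT_eq]
    exact gen_mul_mem g hy
  | mul a b ha hb =>
    intro y hy
    rw [map_mul, mul_assoc]
    exact ha _ (hb _ hy)
  | add a b ha hb =>
    intro y hy
    rw [map_add, add_mul]
    exact (S p).add_mem (ha _ hy) (hb _ hy)

lemma span_eq_top : S p = ⊤ := by
  rw [eq_top_iff]
  intro x _
  obtain ⟨z, rfl⟩ := RingQuot.mkAlgHom_surjective ℂ (BRel p) x
  simpa using mulMk_mem z 1 one_mem

/- ### A matrix representation, used to prove linear independence -/

/-- Matrix of a partial function on indices. -/
noncomputable def pmat {p : ℕ} (f : BIdx p → Option (BIdx p)) :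
    Matrix (BIdx p) (BIdx p) ℂ :=
  Matrix.of fun j k => if f k = some j then 1 else 0

lemma pmat_mul (f g : BIdx p → Option (BIdx p)) :
    pmat f * pmat g = pmat fun k => (g k).bind f := by
  ext j k
  rw [Matrix.mul_apply]
  rcases h : g k with _ | l
  · simp [pmat, h]
  · rw [Finset.sum_eq_single l]
    · simp [pmat, h]
    · intro b _ hb
      simp [pmat, h, Ne.symm hb]
    · simp
lemma pmat_none : pmat (fun _ : BIdx p => none) = 0 := by
  ext j k; simp [pmat]

lemma ite_some_eq_some {c : Prop} [Decidable c] {a b : BIdx p} :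
    ((if c then some a else none) = some b) ↔ c ∧ a = b := by
  split_ifs with h <;> simp [h]

lemma sum_e_pmat :
    (∑ s : Fin p, (pmat (mulGen (.e s true)) + pmat (mulGen (.e s false)))) = 1 := by
  ext j k
  simp only [Matrix.sum_apply, Matrix.add_apply, pmat, Matrix.of_apply, mulGen,
    ite_some_eq_some, Matrix.one_apply]
  rcases htk : tgt k with ⟨t, τ⟩
  by_cases hjk : j = k
  · subst hjk
    simp only [and_true, Prod.mk.injEq]
    cases τ <;> simp [Finset.sum_ite_eq']
  · simp [Ne.symm hjk, hjk]

/-- The representation on the free algebra. -/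
noncomputable def φF (p : ℕ) : FreeAlgebra ℂ (BGen p) →ₐ[ℂ] Matrix (BIdx p) (BIdx p) ℂ :=
  FreeAlgebra.lift ℂ fun g => pmat (mulGen g)

lemma φF_gE (s : Fin p) (σ : Bool) : φF p (gE p s σ) = pmat (mulGen (.e s σ)) :=
  FreeAlgebra.lift_ι_apply _ _
lemma φF_gA (s : Fin (p - 1)) (i : Fin 2) : φF p (gA p s i) = pmat (mulGen (.a s i)) :=
  FreeAlgebra.lift_ι_apply _ _
lemma φF_gB (s : Fin (p - 1)) (i : Fin 2) : φF p (gB p s i) = pmat (mulGen (.b s i)) :=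
  FreeAlgebra.lift_ι_apply _ _

set_option maxHeartbeats 1000000 in
lemma φF_rel {x y : FreeAlgebra ℂ (BGen p)} (h : BRel p x y) : φF p x = φF p y := by
  induction h with
  | orth s t σ τ =>
    rw [map_mul, φF_gE, φF_gE, pmat_mul, apply_ite (φF p), map_zero, φF_gE]
    by_cases hc : s = t ∧ σ = τ
    · obtain ⟨rfl, rfl⟩ := hc
      rw [if_pos ⟨rfl, rfl⟩]
      refine congrArg pmat (funext fun k => ?_)
      simp only [mulGen]
      split_ifs with h <;> simp [h, mulGen]
    · rw [if_neg hc, ← pmat_none]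
      refine congrArg pmat (funext fun k => ?_)
      simp only [mulGen]
      split_ifs with h
      · simp [← h, Prod.mk.injEq, hc, mulGen]
      · rfl
  | sum_eq_one =>
    rw [map_sum, map_one]
    simp only [map_add, φF_gE]
    exact sum_e_pmat
  | a_sandwich s i =>
    rw [map_mul, map_mul, φF_gE, φF_gE, φF_gA, pmat_mul, pmat_mul]
    refine congrArg pmat (funext fun k => ?_)
    cases k with
    | e t τ =>
      by_cases h : (finIncl s, true) = (t, τ)
      · obtain ⟨h1, h2⟩ := Prod.mk.injEq .. ▸ h
        subst h1; subst h2
        simp [mulGen, tgt]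
      · have h1 : ¬ (finIncl s = t ∧ τ = true) := fun ⟨ha, hb⟩ => h (by rw [ha, hb])
        have h2 : ¬ (finIncl s = t ∧ true = τ) := fun ⟨ha, hb⟩ => h (by rw [ha, hb])
        simp [mulGen, tgt, h, h1, h2]
    | a t j => simp [mulGen, tgt]
    | b t j =>
      by_cases hts : t = s
      · subst hts
        simp only [mulGen, tgt]
        split_ifs with h <;> simp [mulGen, tgt, h]
      · simp only [mulGen, tgt]
        have hne : ¬ finIncl s = finIncl t := fun h => hts (finIncl_inj h.symm)
        simp [hne, hts]
    | ba t =>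
      simp only [mulGen, tgt]
      split_ifs with h <;> simp [mulGen, tgt] <;> split_ifs <;> simp
    | ab t => simp [mulGen, tgt]
  | b_sandwich s i =>
    rw [map_mul, map_mul, φF_gE, φF_gE, φF_gB, pmat_mul, pmat_mul]
    refine congrArg pmat (funext fun k => ?_)
    cases k with
    | e t τ =>
      by_cases h : (finIncl s, false) = (t, τ)
      · obtain ⟨h1, h2⟩ := Prod.mk.injEq .. ▸ h
        subst h1; subst h2
        simp [mulGen, tgt]
      · have h1 : ¬ (finIncl s = t ∧ τ = false) := fun ⟨ha, hb⟩ => h (by rw [ha, hb])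
        have h2 : ¬ (finIncl s = t ∧ false = τ) := fun ⟨ha, hb⟩ => h (by rw [ha, hb])
        simp [mulGen, tgt, h, h1, h2]
    | b t j => simp [mulGen, tgt]
    | a t j =>
      by_cases hts : t = s
      · subst hts
        simp only [mulGen, tgt]
        split_ifs with h <;> simp [mulGen, tgt, h]
      · simp only [mulGen, tgt]
        have hne : ¬ finIncl s = finIncl t := fun h => hts (finIncl_inj h.symm)
        simp [hne, hts]
    | ab t =>
      simp only [mulGen, tgt]
      split_ifs with h <;> simp [mulGen, tgt] <;> split_ifs <;> simp
    | ba t => simp [mulGen, tgt]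
  | ba_11 s =>
    rw [map_mul, map_zero, φF_gA, φF_gB, pmat_mul, ← pmat_none]
    refine congrArg pmat (funext fun k => ?_)
    cases k <;> (try simp only [mulGen, tgt]) <;> (try split_ifs) <;> simp [mulGen, tgt]
  | ba_22 s =>
    rw [map_mul, map_zero, φF_gA, φF_gB, pmat_mul, ← pmat_none]
    refine congrArg pmat (funext fun k => ?_)
    cases k <;> (try simp only [mulGen, tgt]) <;> (try split_ifs) <;> simp [mulGen, tgt]
  | ba_21 s =>
    rw [map_mul, map_mul, φF_gA, φF_gA, φF_gB, φF_gB, pmat_mul, pmat_mul]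
    refine congrArg pmat (funext fun k => ?_)
    cases k <;> (try simp only [mulGen, tgt]) <;> (try split_ifs) <;> simp [mulGen, tgt]
  | ab_11 s =>
    rw [map_mul, map_zero, φF_gA, φF_gB, pmat_mul, ← pmat_none]
    refine congrArg pmat (funext fun k => ?_)
    cases k <;> (try simp only [mulGen, tgt]) <;> (try split_ifs) <;> simp [mulGen, tgt]
  | ab_22 s =>
    rw [map_mul, map_zero, φF_gA, φF_gB, pmat_mul, ← pmat_none]
    refine congrArg pmat (funext fun k => ?_)
    cases k <;> (try simp only [mulGen, tgt]) <;> (try split_ifs) <;> simp [mulGen, tgt]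
  | ab_21 s =>
    rw [map_mul, map_mul, φF_gA, φF_gA, φF_gB, φF_gB, pmat_mul, pmat_mul]
    refine congrArg pmat (funext fun k => ?_)
    cases k <;> (try simp only [mulGen, tgt]) <;> (try split_ifs) <;> simp [mulGen, tgt]

/-- The representation of `Balg p`. -/
noncomputable def Φ (p : ℕ) : Balg p →ₐ[ℂ] Matrix (BIdx p) (BIdx p) ℂ :=
  RingQuot.liftAlgHom ℂ ⟨φF p, fun _ _ h => φF_rel h⟩

lemma Φ_mk (x : FreeAlgebra ℂ (BGen p)) :
    Φ p (RingQuot.mkAlgHom ℂ (BRel p) x) = φF p x := by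
  unfold Φ
  exact RingQuot.liftAlgHom_mkAlgHom_apply (S := ℂ) (φF p) (fun _ _ h => φF_rel h) x

/-- Left multiplication by a basis path, as a partial function on indices. -/
def pfun {p : ℕ} : BIdx p → BIdx p → Option (BIdx p)
  | .e s σ => mulGen (.e s σ)
  | .a s i => mulGen (.a s i)
  | .b s i => mulGen (.b s i)
  | .ba s => fun k => (mulGen (.a s 0) k).bind (mulGen (.b s 1))
  | .ab s => fun k => (mulGen (.b s 0) k).bind (mulGen (.a s 1))

lemma Φ_basis (k : BIdx p) : Φ p (basisElt p k) = pmat (pfun k) := by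
  cases k with
  | e s σ => rw [basisElt, bE, Φ_mk, φF_gE, pfun]
  | a s i => rw [basisElt, bA, Φ_mk, φF_gA, pfun]
  | b s i => rw [basisElt, bB, Φ_mk, φF_gB, pfun]
  | ba s => rw [basisElt, bB, bA, map_mul, Φ_mk, Φ_mk, φF_gB, φF_gA, pmat_mul, pfun]
  | ab s => rw [basisElt, bB, bA, map_mul, Φ_mk, Φ_mk, φF_gB, φF_gA, pmat_mul, pfun]

lemma pfun_src (k : BIdx p) (t : Fin p) (τ : Bool) :
    pfun k (.e t τ) = if (t, τ) = srcI k then some k else none := by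
  cases k with
  | e s σ =>
    rw [pfun, mulGen, tgt, srcI]
    by_cases h : (t, τ) = (s, σ)
    · obtain ⟨h1, h2⟩ := Prod.mk.injEq .. ▸ h
      subst h1; subst h2
      rw [if_pos rfl]
    · rw [if_neg (fun hh => h hh.symm), if_neg h]
  | a s i =>
    rw [pfun, mulGen, srcI]
    by_cases h : (t, τ) = (finIncl s, true)
    · rw [if_pos h.symm, if_pos h]
    · rw [if_neg (fun hh => h hh.symm), if_neg h]
  | b s i =>
    rw [pfun, mulGen, srcI]
    by_cases h : (t, τ) = (finIncl s, false)
    · rw [if_pos h.symm, if_pos h]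
    · rw [if_neg (fun hh => h hh.symm), if_neg h]
  | ba s =>
    simp only [pfun, srcI]
    rw [mulGen]
    by_cases h : (t, τ) = (finIncl s, true)
    · rw [if_pos h.symm]
      simp [h, mulGen]
    · rw [if_neg (fun hh => h hh.symm)]
      exact (if_neg h).symm
  | ab s =>
    simp only [pfun, srcI]
    rw [mulGen]
    by_cases h : (t, τ) = (finIncl s, false)
    · rw [if_pos h.symm]
      simp [h, mulGen]
    · rw [if_neg (fun hh => h hh.symm)]
      exact (if_neg h).symm

/-- Extracting, from the matrix of `x`, the column entries over the source idempotents. -/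
noncomputable def L (p : ℕ) : Balg p →ₗ[ℂ] (BIdx p → ℂ) where
  toFun x := fun j => Φ p x j (.e (srcI j).1 (srcI j).2)
  map_add' x y := by funext j; simp [Matrix.add_apply]
  map_smul' c x := by funext j; simp [Matrix.smul_apply]

lemma L_basis (k : BIdx p) : L p (basisElt p k) = Pi.single k 1 := by
  funext j
  show Φ p (basisElt p k) j (.e (srcI j).1 (srcI j).2) = _
  rw [Φ_basis]
  show (if pfun k (.e (srcI j).1 (srcI j).2) = some j then (1:ℂ) else 0) = _
  rw [pfun_src]
  by_cases hjk : j = k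
  · subst hjk
    have hc : ((srcI j).1, (srcI j).2) = srcI j := Prod.mk.eta
    rw [if_pos hc, if_pos rfl, Pi.single_eq_same]
  · rw [Pi.single_eq_of_ne hjk]
    rcases em (((srcI j).1, (srcI j).2) = srcI k) with h | h
    · rw [if_pos h, if_neg (fun hh => hjk ((Option.some_injective _ hh).symm))]
    · rw [if_neg h]; simp

lemma basis_li : LinearIndependent ℂ (basisElt p) := by
  have h : LinearIndependent ℂ (fun k : BIdx p => (Pi.single k 1 : BIdx p → ℂ)) := by
    have heq : ⇑(Pi.basisFun ℂ (BIdx p)) = fun k : BIdx p => (Pi.single k 1 : BIdx p → ℂ) :=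
      funext fun k => Pi.basisFun_apply ℂ (BIdx p) k
    exact heq ▸ (Pi.basisFun ℂ (BIdx p)).linearIndependent
  refine LinearIndependent.of_comp (L p) ?_
  have : (L p ∘ basisElt p) = fun k => (Pi.single k 1 : BIdx p → ℂ) := by
    funext k; exact L_basis k
  rw [this]
  exact h

/-- Counting the basis index set. -/
def bidxEquiv (p : ℕ) : BIdx p ≃
    ((Fin p × Bool) ⊕ ((Fin (p-1) × Fin 2) ⊕ ((Fin (p-1) × Fin 2) ⊕ (Fin (p-1) ⊕ Fin (p-1))))) where
  toFun k := match k with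
    | .e s σ => Sum.inl (s, σ)
    | .a s i => Sum.inr (Sum.inl (s, i))
    | .b s i => Sum.inr (Sum.inr (Sum.inl (s, i)))
    | .ba s => Sum.inr (Sum.inr (Sum.inr (Sum.inl s)))
    | .ab s => Sum.inr (Sum.inr (Sum.inr (Sum.inr s)))
  invFun x := match x with
    | Sum.inl (s, σ) => .e s σ
    | Sum.inr (Sum.inl (s, i)) => .a s i
    | Sum.inr (Sum.inr (Sum.inl (s, i))) => .b s i
    | Sum.inr (Sum.inr (Sum.inr (Sum.inl s))) => .ba s
    | Sum.inr (Sum.inr (Sum.inr (Sum.inr s))) => .ab s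
  left_inv k := by cases k <;> rfl
  right_inv x := by rcases x with ⟨s, σ⟩ | (⟨s, i⟩ | (⟨s, i⟩ | (s | s))) <;> rfl

lemma card_bidx (p : ℕ) : Fintype.card (BIdx p) = 2 * p + 6 * (p - 1) := by
  rw [Fintype.card_congr (bidxEquiv p)]
  simp [Fintype.card_sum, Fintype.card_prod]
  ring

end Stmt13

/-- `B_p` is a finite-dimensional `ℂ`-vector space of dimension `8p − 6`, and a
`ℂ`-basis is given by the `2p` idempotents `e_s^±`, the `4(p−1)` elements `a_{s,1}, a_{s,2},
b_{s,1}, b_{s,2}` `(1 ≤ s ≤ p−1)`, and the `2(p−1)` elements `b_{s,2}a_{s,1}` and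
`a_{s,2}b_{s,1}` `(1 ≤ s ≤ p−1)`. -/
theorem stmt_13 (p : ℕ) (hp : 2 ≤ p) :
    FiniteDimensional ℂ (Balg p) ∧
    Module.finrank ℂ (Balg p) = 8 * p - 6 ∧
    ∃ bas : Module.Basis (BIdx p) ℂ (Balg p), ∀ i : BIdx p, bas i = basisElt p i := by
  have li := Stmt13.basis_li (p := p)
  have hsp : ⊤ ≤ Submodule.span ℂ (Set.range (basisElt p)) := by
    rw [show Submodule.span ℂ (Set.range (basisElt p)) = Stmt13.S p from rfl, Stmt13.span_eq_top]
  let bas : Module.Basis (BIdx p) ℂ (Balg p) := Module.Basis.mk li hsp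
  have hbas : ∀ i, bas i = basisElt p i := fun i => by simp [bas, Module.Basis.mk_apply]
  have hfd : FiniteDimensional ℂ (Balg p) := Module.Finite.of_basis bas
  refine ⟨hfd, ?_, bas, hbas⟩
  rw [Module.finrank_eq_card_basis bas, Stmt13.card_bidx]
  omega
end
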